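/- Let Z₁ and W be independent standard normal random variables, ρ ∈ (-1, 1), and Z₂ = ρ Z₁ + √(1-ρ²) W, so that (Z₁, Z₂) is bivariate standard Gaussian with correlation ρ. Then lim_{u→1⁻} log P(Φ(Z₁) > u, Φ(Z₂) > u) / log(1 - u) = 2/(1 + ρ); that is, the coefficient of tail dependence of a bivariate Gaussian pair with correlation ρ is η_Z = (1 + ρ)/2. -/

import Mathlib

open MeasureTheory ProbabilityTheory Real Set Filter

/-- The standard normal distribution function. -/
noncomputable def Phi (z : ℝ) : ℝ :=
  ∫ t in Set.Iic z, (Real.sqrt (2 * Real.pi))⁻¹ * Real.exp (-(t ^ 2) / 2)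

/-- The transformation `g(z) = (1 - Φ(z))⁻¹ - 1`. -/
noncomputable def g (z : ℝ) : ℝ := (1 - Phi z)⁻¹ - 1


open scoped ENNReal NNReal

noncomputable def phi' (t : ℝ) : ℝ := (Real.sqrt (2 * Real.pi))⁻¹ * Real.exp (-(t ^ 2) / 2)

lemma phi'_eq : phi' = gaussianPDFReal 0 1 := by
  funext t
  simp [phi', gaussianPDFReal]

lemma phi'_pos (t : ℝ) : 0 < phi' t := by
  rw [phi'_eq]; exact gaussianPDFReal_pos 0 1 t one_ne_zero

lemma phi'_integrable : Integrable phi' := by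
  rw [phi'_eq]; exact integrable_gaussianPDFReal 0 1

lemma phi'_integral : ∫ t, phi' t = 1 := by
  rw [phi'_eq]; exact integral_gaussianPDFReal_eq_one 0 one_ne_zero

lemma phi'_measurable : Measurable phi' := by
  rw [phi'_eq]; exact measurable_gaussianPDFReal 0 1

lemma gauss_apply (s : Set ℝ) (hs : MeasurableSet s) :
    ((gaussianReal 0 1) s).toReal = ∫ t in s, phi' t := by
  rw [gaussianReal_apply 0 one_ne_zero s, phi'_eq]
  unfold gaussianPDF
  rw [← ofReal_integral_eq_lintegral_ofReal ((integrable_gaussianPDFReal 0 1).restrict)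
    (ae_of_all _ (gaussianPDFReal_nonneg 0 1)),
    ENNReal.toReal_ofReal (integral_nonneg (fun t => gaussianPDFReal_nonneg 0 1 t))]

/-- tail -/
noncomputable def Tl (z : ℝ) : ℝ := ∫ t in Set.Ioi z, phi' t

lemma Phi_def' (z : ℝ) : Phi z = ∫ t in Set.Iic z, phi' t := rfl

lemma Phi_add_Tl (z : ℝ) : Phi z + Tl z = 1 := by
  rw [Phi_def', Tl, ← phi'_integral]
  rw [← setIntegral_union (by simp [Set.disjoint_left]) measurableSet_Ioi
    phi'_integrable.integrableOn phi'_integrable.integrableOn, Set.Iic_union_Ioi,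
    setIntegral_univ]

lemma sqrt2pi_pos : (0:ℝ) < Real.sqrt (2 * Real.pi) := Real.sqrt_pos.mpr (by positivity)

lemma phi'_le (t : ℝ) : phi' t ≤ (Real.sqrt (2 * Real.pi))⁻¹ := by
  rw [phi']
  have : Real.exp (-(t ^ 2) / 2) ≤ 1 := by
    rw [← Real.exp_zero]; apply Real.exp_le_exp.mpr; nlinarith [sq_nonneg t]
  have h2 := mul_le_mul_of_nonneg_left this (inv_nonneg.2 sqrt2pi_pos.le)
  simpa using h2

lemma Tl_pos (z : ℝ) : 0 < Tl z := by
  rw [Tl]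
  rw [setIntegral_pos_iff_support_of_nonneg_ae (ae_of_all _ (fun t => (phi'_pos t).le))
    phi'_integrable.integrableOn]
  have : Function.support phi' = Set.univ := by
    ext t; simp [Function.mem_support, (phi'_pos t).ne']
  rw [this, Set.univ_inter]
  simp

lemma Dlow (z : ℝ) (hz : 0 ≤ z) :
    (Real.sqrt (2*Real.pi))⁻¹ * Real.exp (-((z+1)^2)/2) ≤ ∫ t in Set.Ioc z (z+1), phi' t := by
  have h1 : ∫ t in Set.Ioc z (z+1), (Real.sqrt (2*Real.pi))⁻¹ * Real.exp (-((z+1)^2)/2) ≤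
      ∫ t in Set.Ioc z (z+1), phi' t := by
    apply setIntegral_mono_on (integrableOn_const (by simp))
      phi'_integrable.integrableOn measurableSet_Ioc
    intro t ht
    rw [phi']
    apply mul_le_mul_of_nonneg_left _ (by positivity)
    apply Real.exp_le_exp.mpr
    have h1 : 0 < t := lt_of_le_of_lt hz ht.1
    nlinarith [ht.2, h1]
  calc (Real.sqrt (2*Real.pi))⁻¹ * Real.exp (-((z+1)^2)/2)
      = ∫ t in Set.Ioc z (z+1), (Real.sqrt (2*Real.pi))⁻¹ * Real.exp (-((z+1)^2)/2) := by
        rw [setIntegral_const]; simp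
    _ ≤ _ := h1

lemma Tl_ge (z : ℝ) (hz : 0 ≤ z) :
    (Real.sqrt (2*Real.pi))⁻¹ * Real.exp (-((z+1)^2)/2) ≤ Tl z := by
  refine le_trans (Dlow z hz) ?_
  rw [Tl]
  apply setIntegral_mono_set phi'_integrable.integrableOn
    (ae_of_all _ (fun t => (phi'_pos t).le))
  exact HasSubset.Subset.eventuallyLE Set.Ioc_subset_Ioi_self

lemma Tl_le (z : ℝ) (hz : 0 ≤ z) : Tl z ≤ Real.exp (-(z^2)/2) := by
  have key : ∀ t ∈ Set.Ioi z, phi' t ≤ Real.exp (-(z^2)/2) * phi' (t - z) := by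
    intro t ht
    simp only [Set.mem_Ioi] at ht
    rw [phi', phi', ← mul_assoc, mul_comm (Real.exp (-(z^2)/2)), mul_assoc, ← Real.exp_add]
    apply mul_le_mul_of_nonneg_left _ (by positivity)
    apply Real.exp_le_exp.mpr
    nlinarith [ht, hz]
  calc Tl z ≤ ∫ t in Set.Ioi z, Real.exp (-(z^2)/2) * phi' (t - z) := by
        apply setIntegral_mono_on phi'_integrable.integrableOn
          (((phi'_integrable.comp_sub_right z).const_mul _).integrableOn) measurableSet_Ioi key
    _ = Real.exp (-(z^2)/2) * ∫ t in Set.Ioi z, phi' (t - z) := by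
        rw [integral_const_mul]
    _ ≤ Real.exp (-(z^2)/2) * 1 := by
        apply mul_le_mul_of_nonneg_left _ (by positivity)
        calc ∫ t in Set.Ioi z, phi' (t - z) ≤ ∫ t, phi' (t - z) :=
              setIntegral_le_integral (phi'_integrable.comp_sub_right z)
                (ae_of_all _ (fun t => (phi'_pos _).le))
          _ = 1 := by rw [integral_sub_right_eq_self phi' z, phi'_integral]
    _ = _ := mul_one _

lemma setint_pos {s : Set ℝ} (hs : 0 < volume s) : 0 < ∫ t in s, phi' t := by
  rw [setIntegral_pos_iff_support_of_nonneg_ae (ae_of_all _ (fun t => (phi'_pos t).le))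
    phi'_integrable.integrableOn]
  have h : Function.support phi' = Set.univ := by
    ext t; simp [Function.mem_support, (phi'_pos t).ne']
  rwa [h, Set.univ_inter]

lemma Phi_sub {a b : ℝ} (hab : a ≤ b) : Phi b - Phi a = ∫ t in Set.Ioc a b, phi' t := by
  have h := setIntegral_union (f := phi') (by simp only [Set.disjoint_left, Set.mem_Iic, Set.mem_Ioc]; intro x h1 h2; exact absurd h2.1 (not_lt.mpr h1) : Disjoint (Set.Iic a) (Set.Ioc a b))
    measurableSet_Ioc phi'_integrable.integrableOn phi'_integrable.integrableOn
  rw [Set.Iic_union_Ioc_eq_Iic hab] at h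
  rw [Phi_def', Phi_def', h]; ring

lemma Phi_strictMono : StrictMono Phi := by
  intro a b hab
  have h := Phi_sub hab.le
  have h2 : 0 < ∫ t in Set.Ioc a b, phi' t := setint_pos (by simp [hab])
  linarith

lemma Phi_pos (z : ℝ) : 0 < Phi z := by
  rw [Phi_def']; exact setint_pos (by simp)

lemma Phi_lt_one (z : ℝ) : Phi z < 1 := by
  have := Phi_add_Tl z; have := Tl_pos z; linarith

lemma Tl_lt_one (z : ℝ) : Tl z < 1 := by
  have := Phi_add_Tl z; have := Phi_pos z; linarith

lemma Phi_le_of_nonpos (z : ℝ) (hz : z ≤ 0) : Phi z ≤ Real.exp (-(z^2)/2) := by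
  rw [Phi_def']
  have key : ∀ t ∈ Set.Iic z, phi' t ≤ Real.exp (-(z^2)/2) * phi' (t - z) := by
    intro t ht
    simp only [Set.mem_Iic] at ht
    rw [phi', phi', ← mul_assoc, mul_comm (Real.exp (-(z^2)/2)), mul_assoc, ← Real.exp_add]
    apply mul_le_mul_of_nonneg_left _ (by positivity)
    apply Real.exp_le_exp.mpr
    nlinarith [ht, hz]
  calc ∫ t in Set.Iic z, phi' t ≤ ∫ t in Set.Iic z, Real.exp (-(z^2)/2) * phi' (t - z) := by
        apply setIntegral_mono_on phi'_integrable.integrableOn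
          (((phi'_integrable.comp_sub_right z).const_mul _).integrableOn) measurableSet_Iic key
    _ = Real.exp (-(z^2)/2) * ∫ t in Set.Iic z, phi' (t - z) := by rw [integral_const_mul]
    _ ≤ Real.exp (-(z^2)/2) * 1 := by
        apply mul_le_mul_of_nonneg_left _ (by positivity)
        calc ∫ t in Set.Iic z, phi' (t - z) ≤ ∫ t, phi' (t - z) :=
              setIntegral_le_integral (phi'_integrable.comp_sub_right z)
                (ae_of_all _ (fun t => (phi'_pos _).le))
          _ = 1 := by rw [integral_sub_right_eq_self phi' z, phi'_integral]
    _ = _ := mul_one _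

lemma Phi_lipschitz : LipschitzWith ⟨(Real.sqrt (2 * Real.pi))⁻¹, by positivity⟩ Phi := by
  apply LipschitzWith.of_dist_le_mul
  intro a b
  wlog hab : b ≤ a generalizing a b
  · rw [dist_comm, dist_comm a b]; exact this b a (le_of_not_ge hab)
  rw [Real.dist_eq, Real.dist_eq, abs_of_nonneg (by linarith [(Phi_strictMono.le_iff_le).mpr hab]),
    abs_of_nonneg (by linarith), Phi_sub hab]
  calc ∫ t in Set.Ioc b a, phi' t ≤ ∫ t in Set.Ioc b a, (Real.sqrt (2 * Real.pi))⁻¹ := by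
        apply setIntegral_mono_on phi'_integrable.integrableOn
          (integrableOn_const (by simp)) measurableSet_Ioc
        intro t _; exact phi'_le t
    _ = (Real.sqrt (2 * Real.pi))⁻¹ * (a - b) := by
        rw [setIntegral_const]; simp [Real.volume_Ioc, ENNReal.toReal_ofReal (by linarith : (0:ℝ) ≤ a - b)]
        rw [max_eq_left (by linarith)]
        ring
    _ = _ := rfl

lemma Phi_continuous : Continuous Phi := Phi_lipschitz.continuous

lemma exp_neg_sq_tendsto : Tendsto (fun z : ℝ => Real.exp (-(z^2)/2)) atTop (nhds 0) := by
  apply Real.tendsto_exp_atBot.comp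
  apply Tendsto.atBot_div_const two_pos
  apply tendsto_neg_atBot_iff.mpr
  exact tendsto_pow_atTop two_ne_zero

lemma Tl_tendsto : Tendsto Tl atTop (nhds 0) := by
  apply tendsto_of_tendsto_of_tendsto_of_le_of_le' tendsto_const_nhds exp_neg_sq_tendsto
  · exact Eventually.of_forall (fun z => (Tl_pos z).le)
  · filter_upwards [eventually_ge_atTop (0:ℝ)] with z hz using Tl_le z hz

lemma Phi_tendsto_atTop : Tendsto Phi atTop (nhds 1) := by
  have : Phi = fun z => 1 - Tl z := by funext z; have := Phi_add_Tl z; linarith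
  rw [this]
  simpa using (tendsto_const_nhds (x := (1:ℝ))).sub Tl_tendsto

lemma Phi_tendsto_atBot : Tendsto Phi atBot (nhds 0) := by
  have h1 : Tendsto (fun z : ℝ => z^2) atBot atTop := by
    have h := (tendsto_pow_atTop (n := 2) (by norm_num)).comp tendsto_abs_atBot_atTop (α := ℝ)
    exact h.congr (fun x => sq_abs x)
  have hexp : Tendsto (fun z : ℝ => Real.exp (-(z^2)/2)) atBot (nhds 0) := by
    apply Real.tendsto_exp_atBot.comp
    exact Tendsto.atBot_div_const two_pos (tendsto_neg_atTop_atBot.comp h1)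
  apply tendsto_of_tendsto_of_tendsto_of_le_of_le' tendsto_const_nhds hexp
  · exact Eventually.of_forall (fun z => (Phi_pos z).le)
  · filter_upwards [eventually_le_atBot (0:ℝ)] with z hz using Phi_le_of_nonpos z hz

lemma Phi_surj {u : ℝ} (hu : u ∈ Set.Ioo (0:ℝ) 1) : ∃ z, Phi z = u := by
  obtain ⟨a, ha⟩ := (Phi_tendsto_atBot.eventually (eventually_lt_nhds hu.1)).exists
  obtain ⟨b, hb⟩ := (Phi_tendsto_atTop.eventually (eventually_gt_nhds hu.2)).exists
  have hab : a ≤ b := by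
    by_contra h
    exact absurd (Phi_strictMono.le_iff_le.mpr (le_of_not_ge h)) (by linarith)
  have := intermediate_value_Icc hab Phi_continuous.continuousOn
  obtain ⟨z, _, hz⟩ := this ⟨ha.le, hb.le⟩
  exact ⟨z, hz⟩

noncomputable def PhiInv : ℝ → ℝ := Function.invFun Phi

lemma Phi_PhiInv {u : ℝ} (hu : u ∈ Set.Ioo (0:ℝ) 1) : Phi (PhiInv u) = u :=
  Function.invFun_eq (Phi_surj hu)

lemma PhiInv_tendsto : Tendsto PhiInv (nhdsWithin 1 (Set.Iio 1)) atTop := by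
  rw [tendsto_atTop]
  intro M
  have h1 : Set.Ioo (Phi M) 1 ∈ nhdsWithin (1:ℝ) (Set.Iio 1) :=
    Ioo_mem_nhdsLT_of_mem ⟨Phi_lt_one M, le_refl 1⟩
  filter_upwards [h1] with u hu
  have hu01 : u ∈ Set.Ioo (0:ℝ) 1 := ⟨lt_trans (Phi_pos M) hu.1, hu.2⟩
  have := Phi_PhiInv hu01
  have : Phi M < Phi (PhiInv u) := by rw [this]; exact hu.1
  exact (Phi_strictMono.lt_iff_lt.mp this).le

lemma gauss_withDensity :
    gaussianReal 0 1 = volume.withDensity (fun x => ((phi' x).toNNReal : ℝ≥0∞)) := by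
  rw [gaussianReal_of_var_ne_zero 0 one_ne_zero]
  congr 1
  funext x
  rw [gaussianPDF, phi'_eq, ENNReal.ofReal]

lemma integral_gauss (f : ℝ → ℝ) :
    ∫ x, f x ∂(gaussianReal 0 1) = ∫ x, phi' x * f x := by
  rw [gauss_withDensity, integral_withDensity_eq_integral_smul
    (phi'_measurable.real_toNNReal) f]
  congr 1
  funext x
  rw [NNReal.smul_def, Real.coe_toNNReal _ (phi'_pos x).le, smul_eq_mul]

lemma integrable_gauss_iff (f : ℝ → ℝ) (hf : AEStronglyMeasurable f volume) :
    Integrable f (gaussianReal 0 1) ↔ Integrable (fun x => phi' x * f x) volume := by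
  rw [gauss_withDensity, integrable_withDensity_iff_integrable_smul
    (phi'_measurable.real_toNNReal)]
  apply integrable_congr
  apply ae_of_all
  intro x
  show (phi' x).toNNReal • f x = phi' x * f x
  rw [NNReal.smul_def, Real.coe_toNNReal _ (phi'_pos x).le, smul_eq_mul]

lemma exp_mul_phi' (a : ℝ) (x : ℝ) :
    phi' x * Real.exp (a * x) = Real.exp (a^2/2) * gaussianPDFReal a 1 x := by
  rw [phi', gaussianPDFReal]
  push_cast
  rw [mul_one, mul_one]
  rw [mul_assoc, ← Real.exp_add, mul_comm (Real.exp (a^2/2)), mul_assoc, ← Real.exp_add]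
  congr 2
  ring

lemma integrable_exp_gauss (a : ℝ) : Integrable (fun x => Real.exp (a * x)) (gaussianReal 0 1) := by
  have hm : AEStronglyMeasurable (fun x => Real.exp (a * x)) volume :=
    (Real.measurable_exp.comp (measurable_const.mul measurable_id)).aestronglyMeasurable
  rw [integrable_gauss_iff (fun x => Real.exp (a * x)) hm]
  apply Integrable.congr ((integrable_gaussianPDFReal a 1).const_mul (Real.exp (a^2/2)))
  exact ae_of_all _ (fun x => (exp_mul_phi' a x).symm)

lemma mgf_gauss (a : ℝ) : ∫ x, Real.exp (a * x) ∂(gaussianReal 0 1) = Real.exp (a^2/2) := by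
  rw [integral_gauss]
  calc ∫ x, phi' x * Real.exp (a * x)
      = ∫ x, Real.exp (a^2/2) * gaussianPDFReal a 1 x := by
        congr 1; funext x; exact exp_mul_phi' a x
    _ = Real.exp (a^2/2) * ∫ x, gaussianPDFReal a 1 x := integral_const_mul _ _
    _ = Real.exp (a^2/2) := by rw [integral_gaussianPDFReal_eq_one a one_ne_zero, mul_one]

noncomputable def nu : Measure (ℝ × ℝ) := (gaussianReal 0 1).prod (gaussianReal 0 1)

instance : IsProbabilityMeasure nu := by unfold nu; infer_instance

def Sset (ρ s z : ℝ) : Set (ℝ × ℝ) := {p : ℝ × ℝ | z < p.1 ∧ z < ρ * p.1 + s * p.2}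

lemma Sset_measurable (ρ s z : ℝ) : MeasurableSet (Sset ρ s z) := by
  apply MeasurableSet.inter
  · exact measurableSet_lt measurable_const measurable_fst
  · exact measurableSet_lt measurable_const
      ((measurable_fst.const_mul ρ).add (measurable_snd.const_mul s))

lemma rect_subset_Sset {ρ s z : ℝ} (hρ1 : -1 < ρ) (hρ2 : ρ < 1) (hs0 : 0 < s) :
    (Set.Ioc z (z+1)) ×ˢ (Set.Ioi ((1-ρ)/s * z + s⁻¹)) ⊆ Sset ρ s z := by
  rintro ⟨x, w⟩ ⟨hx, hw⟩
  simp only [Set.mem_Ioc, Set.mem_Ioi] at hx hw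
  refine ⟨hx.1, ?_⟩
  have h1 : s * w > s * ((1-ρ)/s * z + s⁻¹) := by
    exact (mul_lt_mul_iff_right₀ hs0).mpr hw
  rw [mul_add, ← mul_assoc, mul_div_cancel₀ _ hs0.ne', mul_inv_cancel₀ hs0.ne'] at h1
  have h2 : ρ * x ≥ ρ * z - 1 := by
    rcases le_or_gt 0 ρ with h | h
    · nlinarith [hx.1, hx.2]
    · nlinarith [hx.1, hx.2]
  nlinarith [h1, h2]

lemma rect_measure (a u : ℝ) :
    (nu ((Set.Ioc a (a+1)) ×ˢ (Set.Ioi u))).toReal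
      = (∫ t in Set.Ioc a (a+1), phi' t) * Tl u := by
  rw [nu, Measure.prod_prod, ENNReal.toReal_mul,
    gauss_apply _ measurableSet_Ioc, gauss_apply _ measurableSet_Ioi, Tl]

/-- Chernoff upper bound -/
lemma chernoff {ρ s z : ℝ} (hρ1 : -1 < ρ) (hs : s^2 = 1 - ρ^2) (hz : 0 ≤ z) :
    (nu (Sset ρ s z)).toReal ≤ Real.exp (-(z^2)/(1+ρ)) := by
  have hρ : 0 < 1 + ρ := by linarith
  set θ : ℝ := z / (1+ρ) with hθdef
  have hθ : 0 ≤ θ := div_nonneg hz hρ.le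
  set f : ℝ × ℝ → ℝ := fun p => Real.exp (-(2*θ*z)) *
    (Real.exp ((θ*(1+ρ)) * p.1) * Real.exp ((θ*s) * p.2)) with hfdef
  have hfint : Integrable f nu :=
    ((integrable_exp_gauss (θ*(1+ρ))).mul_prod (integrable_exp_gauss (θ*s))).const_mul _
  have hf_nonneg : ∀ p, 0 ≤ f p := fun p => by positivity
  have step1 : (nu (Sset ρ s z)).toReal ≤ ∫ p, f p ∂nu := by
    have h0 : (nu (Sset ρ s z)).toReal = ∫ _ in Sset ρ s z, (1:ℝ) ∂nu := by
      rw [setIntegral_const]; simp; rfl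
    rw [h0]
    calc ∫ _ in Sset ρ s z, (1:ℝ) ∂nu ≤ ∫ p in Sset ρ s z, f p ∂nu := by
          apply setIntegral_mono_on (integrableOn_const (measure_ne_top _ _))
            hfint.integrableOn (Sset_measurable ρ s z)
          rintro ⟨x, w⟩ hp
          obtain ⟨h1, h2⟩ := hp
          rw [hfdef]
          simp only
          rw [← Real.exp_add, ← Real.exp_add]
          apply Real.one_le_exp
          have : 0 ≤ θ * ((1+ρ)*x + s*w - 2*z) := by
            apply mul_nonneg hθ
            nlinarith [h1, h2]
          nlinarith [this]
      _ ≤ ∫ p, f p ∂nu := setIntegral_le_integral hfint (ae_of_all _ hf_nonneg)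
  have step2 : ∫ p, f p ∂nu = Real.exp (-(z^2)/(1+ρ)) := by
    rw [hfdef]
    rw [integral_const_mul, nu, integral_prod_mul (f := fun x => Real.exp ((θ*(1+ρ)) * x)) (g := fun x => Real.exp ((θ*s) * x)), mgf_gauss, mgf_gauss, ← Real.exp_add, ← Real.exp_add]
    congr 1
    have h2 : (θ*(1+ρ))^2/2 + (θ*s)^2/2 = θ^2 * (1+ρ) := by rw [mul_pow, mul_pow, hs]; ring
    rw [h2, hθdef]
    rw [div_pow]
    field_simp
    ring
  linarith [step1, step2.symm.le]

lemma inv_sq_tendsto : Tendsto (fun z : ℝ => (z⁻¹)^2) atTop (nhds 0) := by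
  have := (tendsto_inv_atTop_zero (𝕜 := ℝ)).pow 2
  simpa using this

lemma G_tendsto {J T : ℝ → ℝ} {ρ : ℝ} (hρ : 0 < 1+ρ) (c b : ℝ) (hc : 1 + c^2 = 2/(1+ρ))
    (K : ℝ) (hK : 0 < K)
    (hJup : ∀ᶠ z in atTop, J z ≤ Real.exp (-(z^2)/(1+ρ)))
    (hJlo : ∀ᶠ z in atTop, K * Real.exp (-((z+1)^2)/2) * (K * Real.exp (-(((c*z+b)+1)^2)/2)) ≤ J z)
    (hTup : ∀ᶠ z in atTop, T z ≤ Real.exp (-(z^2)/2))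
    (hTlo : ∀ᶠ z in atTop, K * Real.exp (-((z+1)^2)/2) ≤ T z) :
    Tendsto (fun z => Real.log (J z) / Real.log (T z)) atTop (nhds (2/(1+ρ))) := by
  set A : ℝ → ℝ := fun z => z^2/(1+ρ) with hA
  set B : ℝ → ℝ := fun z => ((z+1)^2 + (c*z+b+1)^2)/2 - 2*Real.log K with hB
  set C : ℝ → ℝ := fun z => z^2/2 with hC
  set Dd : ℝ → ℝ := fun z => (z+1)^2/2 - Real.log K with hD
  -- eventual two-sided bounds on the ratio
  have hAC : ∀ᶠ z in atTop, 0 < A z ∧ 0 < C z := by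
    filter_upwards [eventually_ge_atTop (1:ℝ)] with z hz
    constructor <;> positivity
  have key : ∀ᶠ z in atTop,
      A z / Dd z ≤ Real.log (J z) / Real.log (T z) ∧
      Real.log (J z) / Real.log (T z) ≤ B z / C z := by
    filter_upwards [hJup, hJlo, hTup, hTlo, hAC, eventually_ge_atTop (1:ℝ)]
      with z hJu hJl hTu hTl hac hz1
    have hJpos : 0 < J z := lt_of_lt_of_le (by positivity) hJl
    have hTpos : 0 < T z := lt_of_lt_of_le (by positivity) hTl
    have hlogJ_up : Real.log (J z) ≤ -A z := by
      calc Real.log (J z) ≤ Real.log (Real.exp (-(z^2)/(1+ρ))) := Real.log_le_log hJpos hJu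
        _ = -(z^2)/(1+ρ) := Real.log_exp _
        _ = -A z := by rw [hA]; ring
    have hlogJ_lo : -B z ≤ Real.log (J z) := by
      have h := Real.log_le_log (by positivity) hJl
      rw [Real.log_mul (by positivity) (by positivity), Real.log_mul (by positivity) (Real.exp_pos _).ne',
        Real.log_mul (by positivity) (Real.exp_pos _).ne', Real.log_exp, Real.log_exp] at h
      calc -B z = Real.log K + -((z+1)^2)/2 + (Real.log K + -((c*z+b+1)^2)/2) := by rw [hB]; ring
        _ ≤ Real.log (J z) := by
            have : c*z+b+1 = (c*z+b)+1 := by ring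
            rw [this]; linarith [h]
    have hlogT_up : Real.log (T z) ≤ -C z := by
      calc Real.log (T z) ≤ Real.log (Real.exp (-(z^2)/2)) := Real.log_le_log hTpos hTu
        _ = -C z := by rw [Real.log_exp, hC]; ring
    have hlogT_lo : -Dd z ≤ Real.log (T z) := by
      have h := Real.log_le_log (by positivity) hTl
      rw [Real.log_mul (by positivity) (Real.exp_pos _).ne', Real.log_exp] at h
      calc -Dd z = Real.log K + -((z+1)^2)/2 := by rw [hD]; ring
        _ ≤ Real.log (T z) := h
    have hlogT_neg : 0 < -Real.log (T z) := by
      have := hac.2; linarith [hlogT_up]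
    have hrw : Real.log (J z) / Real.log (T z) = (-Real.log (J z)) / (-Real.log (T z)) :=
      (neg_div_neg_eq _ _).symm
    rw [hrw]
    constructor
    · apply div_le_div₀ (by linarith [hlogJ_up, hac.1]) (by linarith) (by linarith [hac.2, hlogT_up])
        (by linarith [hlogT_lo])
    · apply div_le_div₀ (by linarith [hlogJ_lo, hlogJ_up, hac.1]) (by linarith) hac.2
        (by linarith [hlogT_up])
  -- limits of the bounding functions
  have hinv : Tendsto (fun z : ℝ => z⁻¹) atTop (nhds 0) := tendsto_inv_atTop_zero
  have hlo : Tendsto (fun z => A z / Dd z) atTop (nhds (2/(1+ρ))) := by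
    have heq : ∀ᶠ z in atTop, A z / Dd z
        = (1/(1+ρ)) / ((1+z⁻¹)^2/2 - Real.log K * (z⁻¹)^2) := by
      filter_upwards [eventually_ge_atTop (1:ℝ)] with z hz
      have hz0 : z ≠ 0 := by linarith
      have hz2 : (z^2) ≠ 0 := pow_ne_zero 2 hz0
      have h1 : (1:ℝ)/(1+ρ) = A z / z^2 := by rw [hA]; field_simp
      have h2 : (1+z⁻¹)^2/2 - Real.log K * (z⁻¹)^2 = Dd z / z^2 := by
        rw [hD]; field_simp
      rw [h1, h2]
      rcases eq_or_ne (Dd z) 0 with h|h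
      · simp [h]
      · field_simp
    rw [tendsto_congr' heq]
    have hden : Tendsto (fun z : ℝ => (1+z⁻¹)^2/2 - Real.log K * (z⁻¹)^2) atTop (nhds (1/2)) := by
      have h1 : Tendsto (fun z : ℝ => (1+z⁻¹)^2/2) atTop (nhds ((1+0)^2/2)) :=
        ((tendsto_const_nhds.add hinv).pow 2).div_const 2
      have h2 : Tendsto (fun z : ℝ => Real.log K * (z⁻¹)^2) atTop (nhds (Real.log K * 0)) :=
        tendsto_const_nhds.mul inv_sq_tendsto
      have := h1.sub h2
      norm_num at this ⊢
      exact this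
    have hthis := (tendsto_const_nhds (x := 1/(1+ρ)) (f := atTop (α := ℝ))).div hden (by norm_num)
    have hval : (1:ℝ)/(1+ρ)/(1/2) = 2/(1+ρ) := by
      have hne : (1+ρ) ≠ 0 := hρ.ne'
      field_simp
    rw [← hval]
    exact hthis
  have hhi : Tendsto (fun z => B z / C z) atTop (nhds (2/(1+ρ))) := by
    have heq : ∀ᶠ z in atTop, B z / C z
        = ((1+z⁻¹)^2 + (c+(b+1)*z⁻¹)^2) - 4 * Real.log K * (z⁻¹)^2 := by
      filter_upwards [eventually_ge_atTop (1:ℝ)] with z hz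
      have hz0 : z ≠ 0 := by linarith
      rw [hB, hC]
      field_simp
      ring
    rw [tendsto_congr' heq]
    have h1 : Tendsto (fun z : ℝ => (1+z⁻¹)^2 + (c+(b+1)*z⁻¹)^2) atTop
        (nhds ((1+0)^2 + (c+(b+1)*0)^2)) :=
      ((tendsto_const_nhds.add hinv).pow 2).add
        ((tendsto_const_nhds.add (tendsto_const_nhds.mul hinv)).pow 2)
    have h2 : Tendsto (fun z : ℝ => 4 * Real.log K * (z⁻¹)^2) atTop (nhds (4 * Real.log K * 0)) :=
      tendsto_const_nhds.mul inv_sq_tendsto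
    have h3 := h1.sub h2
    norm_num at h3
    have : (1:ℝ) + c^2 = 2/(1+ρ) := hc
    rw [← this]
    exact h3.congr (fun x => by rw [← inv_pow])
  exact tendsto_of_tendsto_of_tendsto_of_le_of_le' hlo hhi
    (key.mono (fun z h => h.1)) (key.mono (fun z h => h.2))


/-- For a bivariate standard Gaussian pair `(Z₁, Z₂)` with correlation
`ρ ∈ (-1,1)`, `lim_{u→1⁻} log P(Φ(Z₁) > u, Φ(Z₂) > u) / log(1-u) = 2/(1+ρ)`: the
coefficient of tail dependence of the Gaussian pair is `η_Z = (1+ρ)/2`. -/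
theorem gaussian_coefficient_of_tail_dependence
    {Ω : Type*} [MeasurableSpace Ω] (P : Measure Ω) [IsProbabilityMeasure P]
    (Z₁ W : Ω → ℝ) (hZ₁m : Measurable Z₁) (hWm : Measurable W)
    (hZ₁ : Measure.map Z₁ P = gaussianReal 0 1)
    (hW : Measure.map W P = gaussianReal 0 1)
    (hZW : IndepFun Z₁ W P)
    (ρ : ℝ) (hρ : ρ ∈ Set.Ioo (-1 : ℝ) 1)
    (Z₂ : Ω → ℝ) (hZ₂ : ∀ ω, Z₂ ω = ρ * Z₁ ω + Real.sqrt (1 - ρ ^ 2) * W ω) :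
    Tendsto
      (fun u => Real.log (P {ω | u < Phi (Z₁ ω) ∧ u < Phi (Z₂ ω)}).toReal /
        Real.log (1 - u))
      (nhdsWithin 1 (Set.Iio 1)) (nhds (2 / (1 + ρ))) := by
  obtain ⟨hρ1, hρ2⟩ := hρ
  have hρpos : 0 < 1 + ρ := by linarith
  have h1ρ2 : 0 < 1 - ρ^2 := by nlinarith
  set s : ℝ := Real.sqrt (1 - ρ^2) with hsdef
  have hs0 : 0 < s := Real.sqrt_pos.mpr h1ρ2
  have hs : s^2 = 1 - ρ^2 := Real.sq_sqrt h1ρ2.le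
  set c : ℝ := (1-ρ)/s with hcdef
  set bb : ℝ := s⁻¹ with hbdef
  have hc0 : 0 < c := div_pos (by linarith) hs0
  have hbb0 : 0 < bb := inv_pos.mpr hs0
  have hc : 1 + c^2 = 2/(1+ρ) := by
    have hne1 : (1+ρ) ≠ 0 := hρpos.ne'
    have hne2 : (1:ℝ)-ρ ≠ 0 := by intro h; rw [sub_eq_zero] at h; exact absurd h.symm hρ2.ne
    rw [hcdef, div_pow, hs]
    have h1 : (1:ℝ) - ρ^2 = (1-ρ)*(1+ρ) := by ring
    rw [h1]
    field_simp
    ring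
  -- identify the joint law
  have hmap : Measure.map (fun ω => (Z₁ ω, W ω)) P = nu := by
    have hnu : nu = (Measure.map Z₁ P).prod (Measure.map W P) := by
      rw [hZ₁, hW]; rfl
    rw [hnu]
    exact (indepFun_iff_map_prod_eq_prod_map_map hZ₁m.aemeasurable hWm.aemeasurable).mp hZW
  set J : ℝ → ℝ := fun z => (P {ω | z < Z₁ ω ∧ z < Z₂ ω}).toReal with hJdef
  have hJ_eq : ∀ z, J z = (nu (Sset ρ s z)).toReal := by
    intro z
    have hset : {ω | z < Z₁ ω ∧ z < Z₂ ω} = (fun ω => (Z₁ ω, W ω)) ⁻¹' (Sset ρ s z) := by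
      ext ω
      simp only [Set.mem_setOf_eq, Set.mem_preimage, Sset, hZ₂ ω]
    rw [hJdef]
    simp only
    rw [hset, ← Measure.map_apply (hZ₁m.prodMk hWm) (Sset_measurable ρ s z), hmap]
  -- bounds for J
  have hJup : ∀ᶠ z in atTop, J z ≤ Real.exp (-(z^2)/(1+ρ)) := by
    filter_upwards [eventually_ge_atTop (0:ℝ)] with z hz
    rw [hJ_eq z]
    exact chernoff hρ1 hs hz
  have hK : (0:ℝ) < (Real.sqrt (2*Real.pi))⁻¹ := by positivity
  have hJlo : ∀ᶠ z in atTop, (Real.sqrt (2*Real.pi))⁻¹ * Real.exp (-((z+1)^2)/2) *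
      ((Real.sqrt (2*Real.pi))⁻¹ * Real.exp (-(((c*z+bb)+1)^2)/2)) ≤ J z := by
    filter_upwards [eventually_ge_atTop (0:ℝ)] with z hz
    rw [hJ_eq z]
    have hsub := rect_subset_Sset (z := z) hρ1 hρ2 hs0
    have hmono : (nu ((Set.Ioc z (z+1)) ×ˢ (Set.Ioi (c*z+bb)))).toReal
        ≤ (nu (Sset ρ s z)).toReal :=
      ENNReal.toReal_mono (measure_ne_top _ _) (measure_mono hsub)
    rw [rect_measure] at hmono
    have hD := Dlow z hz
    have hT := Tl_ge (c*z+bb) (by positivity)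
    calc (Real.sqrt (2*Real.pi))⁻¹ * Real.exp (-((z+1)^2)/2) *
          ((Real.sqrt (2*Real.pi))⁻¹ * Real.exp (-(((c*z+bb)+1)^2)/2))
        ≤ (∫ t in Set.Ioc z (z+1), phi' t) * Tl (c*z+bb) := by
          apply mul_le_mul hD hT (by positivity)
          exact le_trans (by positivity) hD
      _ ≤ _ := hmono
  have hTup : ∀ᶠ z in atTop, Tl z ≤ Real.exp (-(z^2)/2) := by
    filter_upwards [eventually_ge_atTop (0:ℝ)] with z hz using Tl_le z hz
  have hTlo : ∀ᶠ z in atTop, (Real.sqrt (2*Real.pi))⁻¹ * Real.exp (-((z+1)^2)/2) ≤ Tl z := by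
    filter_upwards [eventually_ge_atTop (0:ℝ)] with z hz using Tl_ge z hz
  have hmain : Tendsto (fun z => Real.log (J z) / Real.log (Tl z)) atTop
      (nhds (2/(1+ρ))) :=
    G_tendsto hρpos c bb hc _ hK hJup hJlo hTup hTlo
  -- compose with PhiInv and conclude
  have hcomp : Tendsto (fun u => Real.log (J (PhiInv u)) / Real.log (Tl (PhiInv u)))
      (nhdsWithin 1 (Set.Iio 1)) (nhds (2/(1+ρ))) := hmain.comp PhiInv_tendsto
  apply hcomp.congr'
  have h01 : Set.Ioo (0:ℝ) 1 ∈ nhdsWithin (1:ℝ) (Set.Iio 1) :=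
    Ioo_mem_nhdsLT_of_mem ⟨zero_lt_one, le_refl 1⟩
  filter_upwards [h01] with u hu
  have hPhiInv := Phi_PhiInv hu
  have key : ∀ x : ℝ, (u < Phi x ↔ PhiInv u < x) := by
    intro x
    constructor
    · intro h
      have h2 : Phi (PhiInv u) < Phi x := by rw [hPhiInv]; exact h
      exact Phi_strictMono.lt_iff_lt.mp h2
    · intro h
      have h2 := Phi_strictMono h
      rwa [hPhiInv] at h2
  have hsets : {ω | PhiInv u < Z₁ ω ∧ PhiInv u < Z₂ ω}
      = {ω | u < Phi (Z₁ ω) ∧ u < Phi (Z₂ ω)} := by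
    ext ω
    simp only [Set.mem_setOf_eq, key]
  have h1u : Tl (PhiInv u) = 1 - u := by
    have := Phi_add_Tl (PhiInv u)
    rw [hPhiInv] at this
    linarith
  show Real.log (J (PhiInv u)) / Real.log (Tl (PhiInv u)) = _
  rw [hJdef]
  simp only
  rw [hsets, h1u]
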